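/- Let (S, v) be an arborescent poset with consistent anti-linearization and let λ be a strictly decreasing partition (regular λ). If a, b are S-dominant compositions in the orbit S_m·λ with a strictly less than b in Bruhat order, then there exists a minimal S-disorder (i,j) for a such that a < (ij)·a ≤ b in Bruhat order. Consequently, the restriction of the Bruhat order to S-dominant compositions is generated by minimal-disorder transpositions. -/

import Mathlib

/-- An arborescent poset with consistent anti-linearization: a poset `S` with an
order-reversing injection `v : S → Fin m` such that whenever `v s < v t < v r` and
`r < s`, also `r < t`. -/
structure AntiLin (S : Type*) [PartialOrder S] (m : ℕ) where
  v : S → Fin m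
  inj : Function.Injective v
  anti : ∀ ⦃s t : S⦄, t < s → v s < v t
  cons : ∀ ⦃s t r : S⦄, v s < v t → v t < v r → r < s → r < t

/-- A composition `d` is `S`-dominant: it vanishes outside the image of `v`, and
`d (v t) ≤ d (v s)` whenever `t < s` in `S`. -/
def SDominant {S : Type*} [PartialOrder S] {m : ℕ} (A : AntiLin S m)
    (d : Fin m → ℕ) : Prop :=
  (∀ l : Fin m, (∀ s : S, A.v s ≠ l) → d l = 0) ∧
  (∀ s t : S, t < s → d (A.v t) ≤ d (A.v s))

/-- `(i, j)` is a minimal `S`-disorder for the composition `d`: `i < j`, the preimages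
of `i` and `j` under `v` are incomparable, `d i > d j`, and for every `l` with
`i < l < j` lying in the image of `v`: if `v⁻¹ l ≺ v⁻¹ i` then `d l ≤ d j`; if
`v⁻¹ l ≻ v⁻¹ j` then `d l ≥ d i`; and if `v⁻¹ l` is incomparable with both then
`d l ∉ [d j, d i]`. -/
def MinDisorder {S : Type*} [PartialOrder S] {m : ℕ} (A : AntiLin S m)
    (d : Fin m → ℕ) (i j : Fin m) : Prop :=
  i < j ∧ d j < d i ∧
  ∃ si sj : S, A.v si = i ∧ A.v sj = j ∧ ¬ si ≤ sj ∧ ¬ sj ≤ si ∧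
    ∀ (l : Fin m) (sl : S), A.v sl = l → i < l → l < j →
      (sl < si → d l ≤ d j) ∧ (sj < sl → d i ≤ d l) ∧
      ((¬ sl ≤ si ∧ ¬ si ≤ sl ∧ ¬ sl ≤ sj ∧ ¬ sj ≤ sl) →
        ¬(d j ≤ d l ∧ d l ≤ d i))

/-- One step up in the Bruhat order on compositions: swap two entries in disorder. -/
def BruhatStep {m : ℕ} (d d' : Fin m → ℕ) : Prop :=
  ∃ i j : Fin m, i < j ∧ d j < d i ∧ d' = d ∘ Equiv.swap i j

/-- The Bruhat partial order on (an `S_m`-orbit of) compositions: the reflexive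
transitive closure of disorder swaps. -/
def BruhatLE {m : ℕ} : (Fin m → ℕ) → (Fin m → ℕ) → Prop :=
  Relation.ReflTransGen BruhatStep

/-- Strict Bruhat order. -/
def BruhatLT {m : ℕ} (d d' : Fin m → ℕ) : Prop :=
  BruhatLE d d' ∧ d ≠ d'

section Stmt10Aux

open Finset

variable {m : ℕ}

def pcnt (d : Fin m → ℕ) (k r : ℕ) : ℕ :=
  ∑ l : Fin m, if l.val < k ∧ r ≤ d l then 1 else 0

lemma pcnt_congr {a b : Fin m → ℕ} {k : ℕ} (h : ∀ l : Fin m, l.val < k → a l = b l) (r : ℕ) :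
    pcnt a k r = pcnt b k r := by
  unfold pcnt
  refine Finset.sum_congr rfl fun l _ => ?_
  by_cases hl : l.val < k
  · rw [h l hl]
  · simp [hl]

lemma pcnt_succ (d : Fin m → ℕ) (i : Fin m) (r : ℕ) :
    pcnt d (i.val + 1) r = pcnt d i.val r + (if r ≤ d i then 1 else 0) := by
  unfold pcnt
  rw [← Finset.add_sum_erase _ _ (Finset.mem_univ i),
      ← Finset.add_sum_erase _ _ (Finset.mem_univ i)]
  have h1 : ∀ l ∈ Finset.univ.erase i,
      (if l.val < i.val + 1 ∧ r ≤ d l then 1 else 0) = (if l.val < i.val ∧ r ≤ d l then (1:ℕ) else 0) := by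
    intro l hl
    have : l ≠ i := (Finset.mem_erase.mp hl).1
    have hv : l.val ≠ i.val := fun h => this (Fin.ext h)
    refine if_congr ?_ rfl rfl
    constructor
    · rintro ⟨h1, h2⟩; exact ⟨by omega, h2⟩
    · rintro ⟨h1, h2⟩; exact ⟨by omega, h2⟩
  rw [Finset.sum_congr rfl h1]
  have : ¬ (i.val < i.val) := lt_irrefl _
  by_cases hr : r ≤ d i <;> simp [hr, this] <;> omega

lemma pcnt_split (d : Fin m → ℕ) {k1 k2 : ℕ} (h : k1 ≤ k2) (r : ℕ) :
    pcnt d k2 r = pcnt d k1 r + ∑ l : Fin m, if k1 ≤ l.val ∧ l.val < k2 ∧ r ≤ d l then 1 else 0 := by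
  unfold pcnt
  rw [← Finset.sum_add_distrib]
  refine Finset.sum_congr rfl fun l _ => ?_
  split_ifs <;> omega


def Dom {m : ℕ} (a b : Fin m → ℕ) : Prop := ∀ k r, pcnt b k r ≤ pcnt a k r

lemma pcnt_off (d : Fin m → ℕ) {k : ℕ} {i : Fin m} (hik : i.val < k) (r : ℕ) :
    pcnt d k r
      = (∑ l : Fin m, if l.val < k ∧ l ≠ i ∧ r ≤ d l then 1 else 0)
        + (if r ≤ d i then 1 else 0) := by
  unfold pcnt
  rw [← Finset.add_sum_erase _ _ (Finset.mem_univ i),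
      ← Finset.add_sum_erase _ (fun l : Fin m => if l.val < k ∧ l ≠ i ∧ r ≤ d l then (1:ℕ) else 0)
        (Finset.mem_univ i)]
  have h1 : ∀ l ∈ Finset.univ.erase i,
      (if l.val < k ∧ r ≤ d l then (1:ℕ) else 0) = (if l.val < k ∧ l ≠ i ∧ r ≤ d l then 1 else 0) := by
    intro l hl
    have hne : l ≠ i := (Finset.mem_erase.mp hl).1
    exact if_congr (by tauto) rfl rfl
  rw [Finset.sum_congr rfl h1]
  simp only [hik, true_and, ne_eq, not_true_eq_false, false_and, and_false, if_false]
  by_cases hr : r ≤ d i <;> simp [hr] <;> omega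

lemma pcnt_off2 (d : Fin m → ℕ) {k : ℕ} {i j : Fin m} (hik : i.val < k) (hjk : j.val < k)
    (hij : i ≠ j) (r : ℕ) :
    pcnt d k r
      = (∑ l : Fin m, if l.val < k ∧ l ≠ i ∧ l ≠ j ∧ r ≤ d l then 1 else 0)
        + ((if r ≤ d i then 1 else 0) + (if r ≤ d j then 1 else 0)) := by
  rw [pcnt_off d hik r]
  have h2 : (∑ l : Fin m, if l.val < k ∧ l ≠ i ∧ r ≤ d l then (1:ℕ) else 0)
      = (∑ l : Fin m, if l.val < k ∧ l ≠ i ∧ l ≠ j ∧ r ≤ d l then 1 else 0)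
        + (if r ≤ d j then 1 else 0) := by
    rw [← Finset.add_sum_erase _ (fun l : Fin m => if l.val < k ∧ l ≠ i ∧ r ≤ d l then (1:ℕ) else 0)
          (Finset.mem_univ j),
        ← Finset.add_sum_erase _ (fun l : Fin m => if l.val < k ∧ l ≠ i ∧ l ≠ j ∧ r ≤ d l then (1:ℕ) else 0)
          (Finset.mem_univ j)]
    have h1 : ∀ l ∈ Finset.univ.erase j,
        (if l.val < k ∧ l ≠ i ∧ r ≤ d l then (1:ℕ) else 0)
          = (if l.val < k ∧ l ≠ i ∧ l ≠ j ∧ r ≤ d l then 1 else 0) := by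
      intro l hl
      have hne : l ≠ j := (Finset.mem_erase.mp hl).1
      exact if_congr (by tauto) rfl rfl
    rw [Finset.sum_congr rfl h1]
    have hji : j ≠ i := Ne.symm hij
    simp only [hjk, hji, ne_eq, not_true_eq_false, true_and, false_and, and_false, if_false,
      not_false_eq_true]
    by_cases hr : r ≤ d j <;> simp [hr] <;> omega
  rw [h2]; ring

lemma swap_ne {i j l : Fin m} (h1 : l ≠ i) (h2 : l ≠ j) :
    (a ∘ Equiv.swap i j) l = a l := by
  simp [Equiv.swap_apply_of_ne_of_ne h1 h2]

lemma pcnt_swap_low {a : Fin m → ℕ} {i j : Fin m} (hij : i < j) {k : ℕ} (hk : k ≤ i.val) (r : ℕ) :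
    pcnt (a ∘ Equiv.swap i j) k r = pcnt a k r := by
  refine pcnt_congr (fun l hl => ?_) r
  have h1 : l ≠ i := fun h => by subst h; omega
  have h2 : l ≠ j := fun h => by subst h; have := hij; omega
  exact swap_ne h1 h2

lemma pcnt_swap_mid {a : Fin m → ℕ} {i j : Fin m} (hij : i < j) {k : ℕ}
    (hik : i.val < k) (hkj : k ≤ j.val) (r : ℕ) :
    pcnt (a ∘ Equiv.swap i j) k r + (if r ≤ a i then 1 else 0)
      = pcnt a k r + (if r ≤ a j then 1 else 0) := by
  rw [pcnt_off (a ∘ Equiv.swap i j) hik r, pcnt_off a hik r]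
  have hsum : (∑ l : Fin m, if l.val < k ∧ l ≠ i ∧ r ≤ (a ∘ Equiv.swap i j) l then (1:ℕ) else 0)
      = ∑ l : Fin m, if l.val < k ∧ l ≠ i ∧ r ≤ a l then 1 else 0 := by
    refine Finset.sum_congr rfl fun l _ => ?_
    by_cases hli : l ≠ i
    · by_cases hlk : l.val < k
      · have hlj : l ≠ j := fun h => by subst h; omega
        rw [swap_ne hli hlj]
      · simp [hlk]
    · simp at hli; subst hli; simp
  rw [hsum]
  have : (a ∘ Equiv.swap i j) i = a j := by simp
  rw [this]; ring

lemma pcnt_swap_high {a : Fin m → ℕ} {i j : Fin m} (hij : i < j) {k : ℕ} (hk : j.val < k) (r : ℕ) :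
    pcnt (a ∘ Equiv.swap i j) k r = pcnt a k r := by
  have hik : i.val < k := by have := hij; omega
  have hijne : i ≠ j := Fin.ne_of_lt hij
  rw [pcnt_off2 (a ∘ Equiv.swap i j) hik hk hijne r, pcnt_off2 a hik hk hijne r]
  have hsum : (∑ l : Fin m, if l.val < k ∧ l ≠ i ∧ l ≠ j ∧ r ≤ (a ∘ Equiv.swap i j) l then (1:ℕ) else 0)
      = ∑ l : Fin m, if l.val < k ∧ l ≠ i ∧ l ≠ j ∧ r ≤ a l then 1 else 0 := by
    refine Finset.sum_congr rfl fun l _ => ?_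
    by_cases hli : l = i
    · subst hli; simp
    · by_cases hlj : l = j
      · subst hlj; simp
      · rw [swap_ne hli hlj]
  rw [hsum]
  have h1 : (a ∘ Equiv.swap i j) i = a j := by simp
  have h2 : (a ∘ Equiv.swap i j) j = a i := by simp
  rw [h1, h2]; ring

lemma step_dom {d d' : Fin m → ℕ} (h : BruhatStep d d') : Dom d d' := by
  obtain ⟨i, j, hij, hlt, rfl⟩ := h
  intro k r
  rcases le_or_gt k i.val with hk | hk
  · rw [pcnt_swap_low hij hk]
  rcases le_or_gt k j.val with hk2 | hk2
  · have := pcnt_swap_mid (a := d) hij hk hk2 r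
    have hmono : (if r ≤ d j then (1:ℕ) else 0) ≤ (if r ≤ d i then 1 else 0) := by
      split_ifs with h1 h2 <;> omega
    omega
  · rw [pcnt_swap_high hij hk2]

lemma dom_of_le {a b : Fin m → ℕ} (h : BruhatLE a b) :
    Dom a b ∧ ∃ σ : Equiv.Perm (Fin m), b = a ∘ σ := by
  induction h with
  | refl => exact ⟨fun k r => le_rfl, ⟨Equiv.refl _, rfl⟩⟩
  | tail hac hstep ih =>
    obtain ⟨ihdom, σ, rfl⟩ := ih
    obtain ⟨i, j, hij, hlt, rfl⟩ := hstep
    refine ⟨fun k r => le_trans (step_dom ⟨i, j, hij, hlt, rfl⟩ k r) (ihdom k r),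
      ⟨(Equiv.swap i j).trans σ, funext fun x => rfl⟩⟩

lemma pcnt_perm (a : Fin m → ℕ) (σ : Equiv.Perm (Fin m)) (r : ℕ) :
    pcnt (a ∘ σ) m r = pcnt a m r := by
  unfold pcnt
  have h1 : ∀ d : Fin m → ℕ, (∑ l : Fin m, if l.val < m ∧ r ≤ d l then (1:ℕ) else 0)
      = ∑ l : Fin m, if r ≤ d l then 1 else 0 := by
    intro d; exact Finset.sum_congr rfl fun l _ => if_congr (by simp [l.isLt]) rfl rfl
  rw [h1, h1]
  exact Equiv.sum_comp σ (fun l => if r ≤ a l then 1 else 0)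

variable {S : Type*} [PartialOrder S]

lemma find (A : AntiLin S m) (a b : Fin m → ℕ) (hreg : Function.Injective a)
    (hbinj : Function.Injective b)
    (ha : SDominant A a) (hb : SDominant A b) (hdom : Dom a b)
    (heq : ∀ r, pcnt a m r = pcnt b m r) :
    ∀ n : ℕ, ∀ i : Fin m, ∀ si : S, A.v si = i → b i < a i →
      (∀ r, r ≤ b i → pcnt a i.val r = pcnt b i.val r) →
      m - i.val ≤ n →
      ∃ p q : Fin m, MinDisorder A a p q ∧ Dom (a ∘ Equiv.swap p q) b := by
  intro n
  induction n with
  | zero => intro i si _ _ _ hn; exact absurd hn (by have := i.isLt; omega)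
  | succ n ih =>
    intro i si hvi hlt hG hn
    -- candidate existence
    have hex : ∃ l : Fin m, i < l ∧ b i ≤ a l ∧ a l < a i := by
      by_contra hC
      push_neg at hC
      have hC' : ∀ l : Fin m, i.val < l.val → b i ≤ a l → a i ≤ a l := by
        intro l h1 h2; exact hC l (Fin.lt_def.mpr h1) h2
      have hi1m : i.val + 1 ≤ m := i.isLt
      have hsa : ∀ r, pcnt a m r = pcnt a (i.val+1) r
          + ∑ l : Fin m, if i.val+1 ≤ l.val ∧ l.val < m ∧ r ≤ a l then 1 else 0 :=
        fun r => pcnt_split a hi1m r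
      have hsb : ∀ r, pcnt b m r = pcnt b (i.val+1) r
          + ∑ l : Fin m, if i.val+1 ≤ l.val ∧ l.val < m ∧ r ≤ b l then 1 else 0 :=
        fun r => pcnt_split b hi1m r
      have e1 : pcnt a (i.val+1) (b i) = pcnt b (i.val+1) (b i) := by
        rw [pcnt_succ, pcnt_succ, hG (b i) le_rfl, if_pos (le_of_lt hlt), if_pos le_rfl]
      have e2 : (∑ l : Fin m, if i.val+1 ≤ l.val ∧ l.val < m ∧ b i ≤ a l then (1:ℕ) else 0)
          = ∑ l : Fin m, if i.val+1 ≤ l.val ∧ l.val < m ∧ b i ≤ b l then 1 else 0 := by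
        have := heq (b i); rw [hsa, hsb] at this; omega
      have e3 : (∑ l : Fin m, if i.val+1 ≤ l.val ∧ l.val < m ∧ b i ≤ a l then (1:ℕ) else 0)
          = ∑ l : Fin m, if i.val+1 ≤ l.val ∧ l.val < m ∧ a i ≤ a l then 1 else 0 := by
        refine Finset.sum_congr rfl fun l _ => if_congr ?_ rfl rfl
        constructor
        · rintro ⟨h1, h2, h3⟩; exact ⟨h1, h2, hC' l (by omega) h3⟩
        · rintro ⟨h1, h2, h3⟩; exact ⟨h1, h2, le_trans (le_of_lt hlt) h3⟩
      have e4 : pcnt a (i.val+1) (a i) = pcnt a i.val (a i) + 1 := by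
        rw [pcnt_succ, if_pos le_rfl]
      have e5 : pcnt b (i.val+1) (a i) = pcnt b i.val (a i) := by
        rw [pcnt_succ, if_neg (by omega)]
        omega
      have e6 : pcnt b i.val (a i) ≤ pcnt a i.val (a i) := hdom i.val (a i)
      have e7 := heq (a i)
      rw [hsa, hsb, e4, e5] at e7
      have e8 : (∑ l : Fin m, if i.val+1 ≤ l.val ∧ l.val < m ∧ a i ≤ b l then (1:ℕ) else 0)
          ≤ ∑ l : Fin m, if i.val+1 ≤ l.val ∧ l.val < m ∧ b i ≤ b l then 1 else 0 := by
        refine Finset.sum_le_sum fun l _ => ?_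
        by_cases h1 : i.val + 1 ≤ l.val ∧ l.val < m ∧ a i ≤ b l
        · rw [if_pos h1, if_pos ⟨h1.1, h1.2.1, le_trans (le_of_lt hlt) h1.2.2⟩]
        · rw [if_neg h1]; exact Nat.zero_le _
      omega
    -- select minimal candidate j
    obtain ⟨l0, hl01, hl02, hl03⟩ := hex
    have hCne : (Finset.univ.filter
        (fun l : Fin m => i < l ∧ b i ≤ a l ∧ a l < a i)).Nonempty :=
      ⟨l0, by simp [hl01, hl02, hl03]⟩
    set j := (Finset.univ.filter
        (fun l : Fin m => i < l ∧ b i ≤ a l ∧ a l < a i)).min' hCne with hjdef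
    have hjmem := Finset.min'_mem _ hCne
    rw [← hjdef, Finset.mem_filter] at hjmem
    obtain ⟨-, hij, hbaj, haji⟩ := hjmem
    have hmin : ∀ l : Fin m, i < l → l < j → ¬(b i ≤ a l ∧ a l < a i) := by
      intro l h1 h2 hcon
      have : j ≤ l := Finset.min'_le _ l (by simp [h1, hcon.1, hcon.2])
      exact absurd h2 (not_lt.mpr this)
    have hmin' : ∀ l : Fin m, i.val < l.val → l.val < j.val → b i ≤ a l → a i ≤ a l := by
      intro l h1 h2 h3
      have := hmin l (Fin.lt_def.mpr h1) (Fin.lt_def.mpr h2)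
      omega
    -- sj exists
    have hsj : ∃ sj : S, A.v sj = j := by
      by_contra hns
      push_neg at hns
      have haj0 : a j = 0 := ha.1 j hns
      have hbj0 : b j = 0 := hb.1 j hns
      have hbi0 : b i = 0 := by omega
      have heij : i = j := hbinj (by rw [hbi0, hbj0])
      rw [heij] at hij
      exact lt_irrefl _ hij
    obtain ⟨sj, hvj⟩ := hsj
    have hsisj : ¬ si ≤ sj := by
      intro hle
      rcases eq_or_lt_of_le hle with heq' | hlt'
      · rw [heq'] at hvi
        have heij : i = j := hvi.symm.trans hvj
        rw [heij] at hij
        exact lt_irrefl _ hij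
      · have := A.anti hlt'
        rw [hvi, hvj] at this
        exact absurd hij (not_lt.mpr (le_of_lt this))
    by_cases hjile : sj ≤ si
    · -- comparable: transition to j
      have hjlt : sj < si := lt_of_le_of_ne hjile (by
        rintro rfl
        have heij : i = j := hvi.symm.trans hvj
        rw [heij] at hij
        exact lt_irrefl _ hij)
      have hbji : b j ≤ b i := by
        have := hb.2 si sj hjlt; rwa [hvi, hvj] at this
      have hbjaj : b j < a j := by
        rcases lt_or_eq_of_le (le_trans hbji hbaj) with h | h
        · exact h
        · exfalso
          have hbe : b i = b j := by omega
          have heij : i = j := hbinj hbe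
          rw [heij] at hij
          exact lt_irrefl _ hij
      have hG' : ∀ r, r ≤ b j → pcnt a j.val r = pcnt b j.val r := by
        intro r hr
        have hijv : i.val ≤ j.val := le_of_lt hij
        rw [pcnt_split a hijv r, pcnt_split b hijv r, hG r (le_trans hr hbji)]
        congr 1
        refine Finset.sum_congr rfl fun l _ => if_congr ?_ rfl rfl
        constructor
        · rintro ⟨h1, h2, h3⟩
          refine ⟨h1, h2, ?_⟩
          rcases Nat.eq_or_lt_of_le h1 with hei | hlt2
          · have : l = i := Fin.ext hei.symm
            subst this
            exact le_trans hr hbji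
          · rcases Classical.em (∃ sl : S, A.v sl = l) with ⟨sl, hvl⟩ | hno
            · have hcons : sj < sl := by
                refine A.cons (s := si) (t := sl) (r := sj) ?_ ?_ hjlt
                · rw [hvi, hvl]; exact Fin.lt_def.mpr hlt2
                · rw [hvl, hvj]; exact Fin.lt_def.mpr h2
              have hbl : b j ≤ b l := by
                have := hb.2 sl sj hcons; rwa [hvl, hvj] at this
              exact le_trans hr hbl
            · push_neg at hno
              have : b l = 0 := hb.1 l hno
              have ha0 : a l = 0 := ha.1 l hno
              omega
        · rintro ⟨h1, h2, h3⟩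
          refine ⟨h1, h2, ?_⟩
          rcases Nat.eq_or_lt_of_le h1 with hei | hlt2
          · have : l = i := Fin.ext hei.symm
            subst this
            omega
          · rcases Classical.em (∃ sl : S, A.v sl = l) with ⟨sl, hvl⟩ | hno
            · have hcons : sj < sl := by
                refine A.cons (s := si) (t := sl) (r := sj) ?_ ?_ hjlt
                · rw [hvi, hvl]; exact Fin.lt_def.mpr hlt2
                · rw [hvl, hvj]; exact Fin.lt_def.mpr h2
              have hal : a j ≤ a l := by
                have := ha.2 sl sj hcons; rwa [hvl, hvj] at this
              omega
            · push_neg at hno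
              have : b l = 0 := hb.1 l hno
              have ha0 : a l = 0 := ha.1 l hno
              omega
      exact ih j sj hvj hbjaj hG' (by
        have := Fin.lt_def.mp hij
        omega)
    · -- incomparable: finalize
      refine ⟨i, j, ⟨hij, haji, si, sj, hvi, hvj, hsisj, hjile, ?_⟩, ?_⟩
      · intro l sl hvl hil hlj
        have hlne_i : a l ≠ a i := fun h => by
          have := hreg h; subst this; exact absurd hil (lt_irrefl _)
        have hlne_j : a l ≠ a j := fun h => by
          have := hreg h; subst this; exact absurd hlj (lt_irrefl _)
        have hm := hmin l hil hlj
        refine ⟨?_, ?_, ?_⟩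
        · intro hslsi
          have h1 : a l ≤ a i := by
            have := ha.2 si sl hslsi; rwa [hvl, hvi] at this
          omega
        · intro hsjsl
          have h1 : a j ≤ a l := by
            have := ha.2 sl sj hsjsl; rwa [hvl, hvj] at this
          omega
        · rintro - ⟨h1, h2⟩
          omega
      · -- dominance of the swap
        intro k r
        rcases le_or_gt k i.val with hk | hk
        · rw [pcnt_swap_low hij hk]; exact hdom k r
        rcases le_or_gt k j.val with hk2 | hk2
        · have hmid := pcnt_swap_mid (a := a) hij hk hk2 r
          by_cases hr : a j < r ∧ r ≤ a i
          · rw [if_pos hr.2, if_neg (by omega)] at hmid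
            have key : pcnt b k r + 1 ≤ pcnt a k r := by
              have hik1 : i.val + 1 ≤ k := hk
              have e1 : pcnt a k r = pcnt a (i.val+1) r
                  + ∑ l : Fin m, if i.val+1 ≤ l.val ∧ l.val < k ∧ r ≤ a l then 1 else 0 :=
                pcnt_split a hik1 r
              have e2 : pcnt b k r = pcnt b (i.val+1) r
                  + ∑ l : Fin m, if i.val+1 ≤ l.val ∧ l.val < k ∧ r ≤ b l then 1 else 0 :=
                pcnt_split b hik1 r
              have e3 : pcnt a (i.val+1) r = pcnt a i.val r + 1 := by
                rw [pcnt_succ, if_pos hr.2]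
              have e4 : pcnt b (i.val+1) r = pcnt b i.val r := by
                rw [pcnt_succ, if_neg (by omega)]
                omega
              have e5 : (∑ l : Fin m, if i.val+1 ≤ l.val ∧ l.val < k ∧ r ≤ a l then (1:ℕ) else 0)
                  = ∑ l : Fin m, if i.val+1 ≤ l.val ∧ l.val < k ∧ b i ≤ a l then 1 else 0 := by
                refine Finset.sum_congr rfl fun l _ => if_congr ?_ rfl rfl
                constructor
                · rintro ⟨h1, h2, h3⟩
                  exact ⟨h1, h2, by omega⟩
                · rintro ⟨h1, h2, h3⟩
                  refine ⟨h1, h2, ?_⟩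
                  have hai : a i ≤ a l := hmin' l (by omega) (by omega) h3
                  have : a l ≠ a i := fun h => by
                    have h' := hreg h
                    subst h'
                    omega
                  omega
              have e6 : (∑ l : Fin m, if i.val+1 ≤ l.val ∧ l.val < k ∧ r ≤ b l then (1:ℕ) else 0)
                  ≤ ∑ l : Fin m, if i.val+1 ≤ l.val ∧ l.val < k ∧ b i ≤ b l then 1 else 0 := by
                refine Finset.sum_le_sum fun l _ => ?_
                by_cases h1 : i.val+1 ≤ l.val ∧ l.val < k ∧ r ≤ b l
                · rw [if_pos h1, if_pos ⟨h1.1, h1.2.1, by omega⟩]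
                · rw [if_neg h1]; exact Nat.zero_le _
              have e7 := hdom k (b i)
              have e8 : pcnt a k (b i) = pcnt a i.val (b i) + 1
                  + ∑ l : Fin m, if i.val+1 ≤ l.val ∧ l.val < k ∧ b i ≤ a l then 1 else 0 := by
                rw [pcnt_split a hik1 (b i), pcnt_succ, if_pos (by omega)]
              have e9 : pcnt b k (b i) = pcnt b i.val (b i) + 1
                  + ∑ l : Fin m, if i.val+1 ≤ l.val ∧ l.val < k ∧ b i ≤ b l then 1 else 0 := by
                rw [pcnt_split b hik1 (b i), pcnt_succ, if_pos le_rfl]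
              have e10 : pcnt a i.val (b i) = pcnt b i.val (b i) := hG (b i) le_rfl
              have e11 : pcnt b i.val r ≤ pcnt a i.val r := hdom i.val r
              omega
            omega
          · have : (if r ≤ a i then (1:ℕ) else 0) = (if r ≤ a j then 1 else 0) := by
              by_cases h1 : r ≤ a j
              · rw [if_pos h1, if_pos (by omega)]
              · rw [if_neg h1, if_neg (by omega)]
            rw [this] at hmid
            have := hdom k r
            omega
        · rw [pcnt_swap_high hij hk2]; exact hdom k r

lemma swap_sdominant {A : AntiLin S m} {a : Fin m → ℕ} (ha : SDominant A a)
    {i j : Fin m} (hd : MinDisorder A a i j) : SDominant A (a ∘ Equiv.swap i j) := by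
  obtain ⟨hij, hlt, si, sj, hvi, hvj, h1, h2, hmid⟩ := hd
  have hijne : i ≠ j := Fin.ne_of_lt hij
  constructor
  · intro l hl
    have hli : l ≠ i := fun h => hl si (h ▸ hvi)
    have hlj : l ≠ j := fun h => hl sj (h ▸ hvj)
    simp only [Function.comp_apply, Equiv.swap_apply_of_ne_of_ne hli hlj]
    exact ha.1 l hl
  · intro s t hts
    have hanti := A.anti hts
    by_cases hsi : A.v s = i
    · -- s = si
      have hs : s = si := A.inj (hsi.trans hvi.symm)
      rw [hs] at hts
      have hti : A.v t ≠ i := fun h => by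
        rw [← hvi] at h
        exact absurd (A.inj h) (ne_of_lt (hs ▸ hts))
      have htj : A.v t ≠ j := fun h => by
        have : t = sj := A.inj (h.trans hvj.symm)
        rw [this] at hts
        exact h2 (le_of_lt hts)
      simp only [Function.comp_apply, hsi, Equiv.swap_apply_left,
        Equiv.swap_apply_of_ne_of_ne hti htj]
      -- goal : a (v t) ≤ a j
      rw [hsi] at hanti
      rcases lt_or_ge j.val (A.v t).val with hgt | hle2
      · have htsj : t < sj := by
          refine A.cons (s := si) (t := sj) (r := t) ?_ ?_ hts
          · rw [hvi, hvj]; exact hij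
          · rw [hvj]; exact Fin.lt_def.mpr hgt
        have := ha.2 sj t htsj
        rwa [hvj] at this
      · have hltj : A.v t < j := lt_of_le_of_ne (Fin.le_def.mpr hle2) htj
        exact (hmid (A.v t) t rfl hanti hltj).1 hts
    · by_cases hsj : A.v s = j
      · -- s = sj
        have hs : s = sj := A.inj (hsj.trans hvj.symm)
        rw [hs] at hts
        have hti : A.v t ≠ i := fun h => by
          have : t = si := A.inj (h.trans hvi.symm)
          rw [this] at hts
          exact h1 (le_of_lt hts)
        have htj : A.v t ≠ j := fun h => by
          have : t = sj := A.inj (h.trans hvj.symm)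
          rw [this] at hts
          exact absurd hts (lt_irrefl _)
        simp only [Function.comp_apply, hsj, Equiv.swap_apply_right,
          Equiv.swap_apply_of_ne_of_ne hti htj]
        have h3 := ha.2 sj t hts
        rw [hvj] at h3
        omega
      · by_cases hti : A.v t = i
        · -- t = si
          have ht : t = si := A.inj (hti.trans hvi.symm)
          rw [ht] at hts
          simp only [Function.comp_apply, hti, Equiv.swap_apply_left,
            Equiv.swap_apply_of_ne_of_ne hsi hsj]
          have h3 := ha.2 s si hts
          rw [hvi] at h3
          omega
        · by_cases htj : A.v t = j
          · -- t = sj, sj < s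
            have ht : t = sj := A.inj (htj.trans hvj.symm)
            rw [ht] at hts
            simp only [Function.comp_apply, htj, Equiv.swap_apply_right,
              Equiv.swap_apply_of_ne_of_ne hsi hsj]
            rw [htj] at hanti
            rcases lt_or_ge (A.v s).val i.val with hless | hge
            · exfalso
              have hcc : sj < si := by
                refine A.cons (s := s) (t := si) (r := sj) ?_ ?_ hts
                · rw [hvi]; exact Fin.lt_def.mpr hless
                · rw [hvi, hvj]; exact hij
              exact h2 (le_of_lt hcc)
            · have hgi : i < A.v s := by
                rcases Nat.eq_or_lt_of_le hge with he | hlt2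
                · exfalso
                  exact hsi (Fin.ext he.symm)
                · exact Fin.lt_def.mpr hlt2
              exact (hmid (A.v s) s rfl hgi hanti).2.1 hts
          · simp only [Function.comp_apply, Equiv.swap_apply_of_ne_of_ne hti htj,
              Equiv.swap_apply_of_ne_of_ne hsi hsj]
            exact ha.2 s t hts

lemma measure_swap_lt {a : Fin m → ℕ} {i j : Fin m} (hij : i < j) (hlt : a j < a i) :
    (∑ l : Fin m, (m - l.val) * ((a ∘ Equiv.swap i j) l)) < ∑ l : Fin m, (m - l.val) * a l := by
  have hijne : i ≠ j := Fin.ne_of_lt hij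
  have hjm : j.val < m := j.isLt
  have hmemj : j ∈ Finset.univ.erase i := Finset.mem_erase.mpr ⟨Ne.symm hijne, Finset.mem_univ j⟩
  have key : ∀ d : Fin m → ℕ,
      (∑ l : Fin m, (m - l.val) * d l)
        = (m - i.val) * d i + ((m - j.val) * d j
          + ∑ l ∈ (Finset.univ.erase i).erase j, (m - l.val) * d l) := by
    intro d
    rw [← Finset.add_sum_erase _ _ (Finset.mem_univ i), ← Finset.add_sum_erase _ _ hmemj]
  rw [key (a ∘ Equiv.swap i j), key a]
  have hsame : (∑ l ∈ (Finset.univ.erase i).erase j, (m - l.val) * ((a ∘ Equiv.swap i j) l))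
      = ∑ l ∈ (Finset.univ.erase i).erase j, (m - l.val) * a l := by
    refine Finset.sum_congr rfl fun l hl => ?_
    have hlj : l ≠ j := (Finset.mem_erase.mp hl).1
    have hli : l ≠ i := (Finset.mem_erase.mp (Finset.mem_erase.mp hl).2).1
    simp [Equiv.swap_apply_of_ne_of_ne hli hlj]
  rw [hsame]
  have hci : (a ∘ Equiv.swap i j) i = a j := by simp
  have hcj : (a ∘ Equiv.swap i j) j = a i := by simp
  rw [hci, hcj]
  have hvlt : j.val < m := j.isLt
  have hivj : i.val < j.val := Fin.lt_def.mp hij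
  obtain ⟨t, ht⟩ := Nat.exists_eq_add_of_lt (show m - j.val < m - i.val by omega)
  have harith : (m - i.val) * a j + (m - j.val) * a i < (m - i.val) * a i + (m - j.val) * a j := by
    rw [ht]
    have h1 : (t + 1) * a j < (t + 1) * a i := by
      have : 0 < t + 1 := by omega
      exact (Nat.mul_lt_mul_left this).mpr hlt
    nlinarith
  omega

lemma chain (A : AntiLin S m) (b : Fin m → ℕ) (hb : SDominant A b)
    (hbinj : Function.Injective b) :
    ∀ N : ℕ, ∀ a : Fin m → ℕ, (∑ l : Fin m, (m - l.val) * a l) ≤ N →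
      Function.Injective a → SDominant A a → Dom a b →
      (∃ σ : Equiv.Perm (Fin m), b = a ∘ σ) →
      Relation.ReflTransGen (fun c c' : Fin m → ℕ => SDominant A c ∧ SDominant A c' ∧
        ∃ i j : Fin m, MinDisorder A c i j ∧ c' = c ∘ Equiv.swap i j) a b := by
  intro N
  induction N using Nat.strong_induction_on with
  | _ N ih =>
    intro a hM hainj haS hdom hσ
    by_cases hab : a = b
    · subst hab; exact Relation.ReflTransGen.refl
    have hDne : (Finset.univ.filter (fun l : Fin m => a l ≠ b l)).Nonempty := by
      obtain ⟨l, hl⟩ := Function.ne_iff.mp hab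
      exact ⟨l, by simp [hl]⟩
    set i0 := Finset.min' _ hDne with hi0
    have hi0mem := Finset.min'_mem _ hDne
    rw [← hi0, Finset.mem_filter] at hi0mem
    have hpre : ∀ l : Fin m, l.val < i0.val → a l = b l := by
      intro l hl
      by_contra hc
      have h2 : i0 ≤ l := Finset.min'_le _ l (by simp [hc])
      rw [Fin.le_def] at h2; omega
    have hG0 : ∀ r, pcnt a i0.val r = pcnt b i0.val r :=
      fun r => pcnt_congr (fun l hl => hpre l hl) r
    have heqm : ∀ r, pcnt a m r = pcnt b m r := by
      obtain ⟨σ, hσ'⟩ := hσ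
      intro r
      rw [hσ', pcnt_perm a σ r]
    have hlt : b i0 < a i0 := by
      have h1 := hdom (i0.val + 1) (b i0)
      rw [pcnt_succ, pcnt_succ, hG0 (b i0), if_pos le_rfl] at h1
      have h2 : b i0 ≤ a i0 := by
        by_contra hc
        rw [if_neg hc] at h1; omega
      exact lt_of_le_of_ne h2 (Ne.symm hi0mem.2)
    have hsi : ∃ si : S, A.v si = i0 := by
      by_contra hns; push_neg at hns
      have := haS.1 i0 hns
      omega
    obtain ⟨si, hvsi⟩ := hsi
    obtain ⟨p, q, hmd, hdom'⟩ := find A a b hainj hbinj haS hb hdom heqm m i0 si hvsi hlt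
      (fun r _ => hG0 r) (by omega)
    have hcS : SDominant A (a ∘ Equiv.swap p q) := swap_sdominant haS hmd
    have hMc : (∑ l : Fin m, (m - l.val) * ((a ∘ Equiv.swap p q) l)) < N :=
      lt_of_lt_of_le (measure_swap_lt hmd.1 hmd.2.1) hM
    have hσ2 : ∃ σ : Equiv.Perm (Fin m), b = (a ∘ Equiv.swap p q) ∘ σ := by
      obtain ⟨σ, hσ'⟩ := hσ
      refine ⟨σ.trans (Equiv.swap p q), ?_⟩
      funext x
      simp [hσ', Equiv.swap_apply_self]
    refine Relation.ReflTransGen.head ⟨haS, hcS, p, q, hmd, rfl⟩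
      (ih _ hMc _ (le_refl _) (hainj.comp (Equiv.injective _)) hcS hdom' hσ2)


end Stmt10Aux

/-- For regular `λ` (the composition `a` has pairwise distinct entries): if `a` and
`b` are `S`-dominant and `a` is strictly Bruhat-smaller than `b`, then some minimal
`S`-disorder transposition applied to `a` stays `≤ b`; consequently the Bruhat order
restricted to `S`-dominant compositions is generated by minimal-disorder
transpositions. -/
theorem stmt_10 {S : Type*} [PartialOrder S] [Finite S] {m : ℕ} (A : AntiLin S m)
    (a b : Fin m → ℕ) (hreg : Function.Injective a)
    (ha : SDominant A a) (hb : SDominant A b) (hab : BruhatLT a b) :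
    (∃ i j : Fin m, MinDisorder A a i j ∧
        BruhatLT a (a ∘ Equiv.swap i j) ∧ BruhatLE (a ∘ Equiv.swap i j) b) ∧
    Relation.ReflTransGen
      (fun c c' : Fin m → ℕ => SDominant A c ∧ SDominant A c' ∧
        ∃ i j : Fin m, MinDisorder A c i j ∧ c' = c ∘ Equiv.swap i j) a b := by
  obtain ⟨hle, hne⟩ := hab
  obtain ⟨hdom, σ, hσ⟩ := dom_of_le hle
  have hbinj : Function.Injective b := by
    rw [hσ]; exact hreg.comp (Equiv.injective σ)
  have hchain := chain A b hb hbinj (∑ l : Fin m, (m - l.val) * a l) a (le_refl _)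
    hreg ha hdom ⟨σ, hσ⟩
  refine ⟨?_, hchain⟩
  rcases Relation.ReflTransGen.cases_head hchain with heq | ⟨c, hstep, htail⟩
  · exact absurd heq hne
  obtain ⟨-, hcS, p, q, hmd, rfl⟩ := hstep
  refine ⟨p, q, hmd, ⟨?_, ?_⟩, ?_⟩
  · exact Relation.ReflTransGen.single ⟨p, q, hmd.1, hmd.2.1, rfl⟩
  · intro hcontra
    have h1 : a p = (a ∘ Equiv.swap p q) p := by rw [← hcontra]
    simp only [Function.comp_apply, Equiv.swap_apply_left] at h1
    have h2 := hreg h1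
    rw [h2] at hmd
    exact absurd hmd.1 (lt_irrefl _)
  · refine Relation.ReflTransGen.mono ?_ _ _ htail
    rintro c c' ⟨-, -, i, j, hmd', rfl⟩
    exact ⟨i, j, hmd'.1, hmd'.2.1, rfl⟩
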